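/- If u : ℝ → ℝ is twice differentiable and satisfies u'' = (1 + (u')²)(x·u' − u) on an interval, then the energy E(x) = (u(x) − x·u'(x))/√(1 + u'(x)²) · exp(−(x² + u(x)²)/2) is constant on that interval (its derivative vanishes). -/

import Mathlib

/-- First integral for the self-similar shrinking curve equation (graph form):
if `u'' = (1+(u')²)(x u' - u)` on an open interval, then the energy
`E(x) = (u - x u')/√(1+(u')²) · exp(-(x²+u²)/2)` has vanishing derivative there. -/
theorem energy_first_integral
    (u : ℝ → ℝ) (I : Set ℝ) (hI : IsOpen I) (hconn : I.OrdConnected)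
    (hu : ∀ x ∈ I, DifferentiableAt ℝ u x)
    (hu' : ∀ x ∈ I, DifferentiableAt ℝ (deriv u) x)
    (hode : ∀ x ∈ I,
      deriv (deriv u) x = (1 + (deriv u x) ^ 2) * (x * deriv u x - u x)) :
    ∀ x ∈ I,
      deriv (fun x => (u x - x * deriv u x) / Real.sqrt (1 + (deriv u x) ^ 2)
        * Real.exp (-(x ^ 2 + (u x) ^ 2) / 2)) x = 0 := by
  intro x hx
  set p := deriv u x with hp
  set q := deriv (deriv u) x with hq
  have hup : HasDerivAt u p x := (hu x hx).hasDerivAt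
  have hup' : HasDerivAt (deriv u) q x := (hu' x hx).hasDerivAt
  have hpos : (0:ℝ) < 1 + p ^ 2 := by positivity
  set s := Real.sqrt (1 + p ^ 2) with hsdef
  have hs0 : (0:ℝ) < s := Real.sqrt_pos.mpr hpos
  have hs2 : s ^ 2 = 1 + p ^ 2 := Real.sq_sqrt hpos.le
  have h1 : HasDerivAt (fun x => u x - x * deriv u x) (p - (1 * p + x * q)) x :=
    hup.sub ((hasDerivAt_id x).mul hup')
  have h2 : HasDerivAt (fun x => 1 + (deriv u x) ^ 2)
      (0 + 2 * p ^ 1 * q) x := by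
    simpa using (hup'.fun_pow 2).const_add (1:ℝ)
  have h3 : HasDerivAt (fun x => Real.sqrt (1 + (deriv u x) ^ 2))
      ((0 + 2 * p ^ 1 * q) / (2 * s)) x := h2.sqrt hpos.ne'
  have h4 : HasDerivAt (fun x => (u x - x * deriv u x) / Real.sqrt (1 + (deriv u x) ^ 2))
      (((p - (1 * p + x * q)) * s - (u x - x * p) * ((0 + 2 * p ^ 1 * q) / (2 * s))) / s ^ 2)
      x := h1.div h3 hs0.ne'
  have h5 : HasDerivAt (fun x => -(x ^ 2 + (u x) ^ 2) / 2)
      (-(2 * x + 2 * u x * p) / 2) x := by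
    simpa using (((hasDerivAt_pow 2 x).add (hup.pow 2)).neg).div_const 2
  have h6 : HasDerivAt (fun x => Real.exp (-(x ^ 2 + (u x) ^ 2) / 2))
      (Real.exp (-(x ^ 2 + (u x) ^ 2) / 2) * (-(2 * x + 2 * u x * p) / 2)) x :=
    h5.exp
  have h7 := (h4.fun_mul h6).deriv
  rw [h7, ← hp, ← hsdef]
  rw [hode x hx, ← hp] at hq
  set E := Real.exp (-(x ^ 2 + (u x) ^ 2) / 2) with hE
  have hfact :
      ((p - (1 * p + x * q)) * s - (u x - x * p) * ((0 + 2 * p ^ 1 * q) / (2 * s))) / s ^ 2 * E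
        + (u x - x * p) / s * (E * (-(2 * x + 2 * u x * p) / 2))
      = E * (1 / s) *
        (-(x * q) - (u x - x * p) * p * q / (1 + p ^ 2)
          + (u x - x * p) * (-(x + u x * p))) := by
    rw [← hs2]
    field_simp
    ring
  rw [hfact, hq]
  have hz : -(x * ((1 + p ^ 2) * (x * p - u x)))
      - (u x - x * p) * p * ((1 + p ^ 2) * (x * p - u x)) / (1 + p ^ 2)
      + (u x - x * p) * (-(x + u x * p)) = 0 := by
    field_simp
    ring
  rw [hz, mul_zero]
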